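/- Let X₁,…,Xₙ be i.i.d. random variables and f a symmetric measurable function of n arguments with Z = f(X₁,…,Xₙ) square-integrable. If (X₁',…,Xₙ') is an independent copy and Z' = f(X₁', X₂,…,Xₙ), then Var(Z) ≤ n · E[(Z − Z')₊²]. -/

import Mathlib

open MeasureTheory ProbabilityTheory
noncomputable section
set_option linter.unusedSectionVars false
set_option linter.unusedVariables false
set_option linter.unnecessarySimpa false
set_option maxHeartbeats 1000000
namespace ES


variable {E : Type*} [MeasurableSpace E]

/-- permutation invariance of iid product measures -/
theorem mp_permGen (P : Measure E) [IsProbabilityMeasure P] {ι : Type*} [Fintype ι] (e : ι ≃ ι) :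
    MeasurePreserving (fun w : ι → E => w ∘ e) (Measure.pi fun _ => P) (Measure.pi fun _ => P) := by
  have hm : Measurable (fun w : ι → E => w ∘ e) :=
    measurable_pi_lambda _ fun i => measurable_pi_apply _
  refine ⟨hm, ?_⟩
  refine (Measure.pi_eq fun s hs => ?_).symm
  rw [Measure.map_apply hm (MeasurableSet.univ_pi hs)]
  have hpre : (fun w : ι → E => w ∘ e) ⁻¹' (Set.pi Set.univ s)
      = Set.pi Set.univ fun j => s (e.symm j) := by
    ext w
    simp only [Set.mem_preimage, Set.mem_univ_pi, Function.comp_apply]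
    constructor
    · intro h j; simpa using h (e.symm j)
    · intro h i; simpa using h (e i)
  rw [hpre, Measure.pi_pi]
  exact Equiv.prod_comp e.symm fun j => P (s j)

variable {n : ℕ}

/-- the mixing map -/
def md (k : ℕ) (p : (Fin n → E) × (Fin n → E)) : Fin n → E :=
  fun i => if (i : ℕ) < k then p.2 i else p.1 i

theorem mdmeas (k : ℕ) : Measurable (md (n := n) (E := E) k) := by
  apply measurable_pi_lambda
  intro i
  by_cases h : (i : ℕ) < k
  · simpa [md, h, Function.comp_def] using (measurable_pi_apply i).comp measurable_snd
  · simpa [md, h, Function.comp_def] using (measurable_pi_apply i).comp measurable_fst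

variable (P : Measure E) [IsProbabilityMeasure P]

theorem mp_md (k : ℕ) :
    MeasurePreserving (md (n := n) k)
      ((Measure.pi fun _ : Fin n => P).prod (Measure.pi fun _ : Fin n => P))
      (Measure.pi fun _ : Fin n => P) := by
  refine ⟨mdmeas k, ?_⟩
  refine (Measure.pi_eq fun s hs => ?_).symm
  rw [Measure.map_apply (mdmeas k) (MeasurableSet.univ_pi hs)]
  have hpre : md (n := n) k ⁻¹' (Set.pi Set.univ s) =
      (Set.pi Set.univ fun i : Fin n => if (i : ℕ) < k then (Set.univ : Set E) else s i) ×ˢ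
      (Set.pi Set.univ fun i : Fin n => if (i : ℕ) < k then s i else (Set.univ : Set E)) := by
    ext p
    simp only [Set.mem_preimage, Set.mem_univ_pi, Set.mem_prod, md]
    constructor
    · intro h
      constructor <;> intro i <;> by_cases hik : (i : ℕ) < k <;>
        simp only [hik, if_true, if_false, Set.mem_univ] <;> simpa [hik] using h i
    · rintro ⟨h1, h2⟩ i
      by_cases hik : (i : ℕ) < k
      · simpa [hik] using h2 i
      · simpa [hik] using h1 i
  rw [hpre, Measure.prod_prod, Measure.pi_pi, Measure.pi_pi, ← Finset.prod_mul_distrib]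
  refine Finset.prod_congr rfl fun i _ => ?_
  by_cases hik : (i : ℕ) < k <;> simp [hik]

theorem mp_refresh (k : Fin n) :
    MeasurePreserving (fun q : (Fin n → E) × E => Function.update q.1 k q.2)
      ((Measure.pi fun _ : Fin n => P).prod P) (Measure.pi fun _ : Fin n => P) := by
  classical
  have hfun : (fun q : (Fin n → E) × E => Function.update q.1 k q.2)
      = fun q (i : Fin n) => if i = k then q.2 else q.1 i := by
    funext q i
    exact Function.update_apply q.1 k q.2 i
  have hm : Measurable (fun q : (Fin n → E) × E => Function.update q.1 k q.2) := by
    rw [hfun]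
    apply measurable_pi_lambda
    intro i
    by_cases h : i = k
    · simpa [h] using measurable_snd
    · simpa [h, Function.comp_def] using (measurable_pi_apply i).comp measurable_fst
  refine ⟨hm, ?_⟩
  refine (Measure.pi_eq fun s hs => ?_).symm
  rw [Measure.map_apply hm (MeasurableSet.univ_pi hs)]
  have hpre : (fun q : (Fin n → E) × E => Function.update q.1 k q.2) ⁻¹' (Set.pi Set.univ s) =
      (Set.pi Set.univ fun i => if i = k then (Set.univ : Set E) else s i) ×ˢ (s k) := by
    rw [hfun]
    ext q
    simp only [Set.mem_preimage, Set.mem_univ_pi, Set.mem_prod]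
    constructor
    · intro h
      refine ⟨fun i => ?_, by simpa using h k⟩
      by_cases hik : i = k <;> simpa [hik] using h i
    · rintro ⟨h1, h2⟩ i
      by_cases hik : i = k
      · simpa [hik] using h2
      · simpa [hik] using h1 i
  rw [hpre, Measure.prod_prod, Measure.pi_pi]
  have h1 : ∀ i : Fin n, P (if i = k then (Set.univ : Set E) else s i)
      = if i = k then 1 else P (s i) := by
    intro i; split <;> simp
  have h2 : P (s k) = ∏ i : Fin n, if i = k then P (s i) else 1 := by
    rw [Finset.prod_ite_eq' Finset.univ k (fun i => P (s i))]; simp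
  simp_rw [h1]
  rw [h2, ← Finset.prod_mul_distrib]
  refine Finset.prod_congr rfl fun i _ => ?_
  split <;> simp

theorem pi_eval_measure (k : Fin n) {t : Set E} (ht : MeasurableSet t) :
    (Measure.pi fun _ : Fin n => P) {y : Fin n → E | y k ∈ t} = P t := by
  classical
  have : {y : Fin n → E | y k ∈ t} = Set.pi Set.univ fun i => if i = k then t else Set.univ := by
    ext y
    simp only [Set.mem_setOf_eq, Set.mem_univ_pi]
    constructor
    · intro h i; by_cases hik : i = k <;> simp [hik, h]
    · intro h; simpa using h k
  rw [this, Measure.pi_pi]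
  have h1 : ∀ i : Fin n, P (if i = k then t else (Set.univ : Set E))
      = if i = k then P t else 1 := by
    intro i; split <;> simp
  simp_rw [h1]
  rw [Finset.prod_ite_eq' Finset.univ k (fun _ => P t)]
  simp

theorem mp_eval (k : Fin n) :
    MeasurePreserving (fun p : (Fin n → E) × (Fin n → E) => (p.1, p.2 k))
      ((Measure.pi fun _ : Fin n => P).prod (Measure.pi fun _ : Fin n => P))
      ((Measure.pi fun _ : Fin n => P).prod P) := by
  have hm : Measurable (fun p : (Fin n → E) × (Fin n → E) => (p.1, p.2 k)) :=
    measurable_fst.prodMk ((measurable_pi_apply k).comp measurable_snd)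
  refine ⟨hm, ?_⟩
  refine (Measure.prod_eq fun s t hs ht => ?_).symm
  rw [Measure.map_apply hm (hs.prod ht)]
  have hpre : (fun p : (Fin n → E) × (Fin n → E) => (p.1, p.2 k)) ⁻¹' (s ×ˢ t)
      = s ×ˢ {y : Fin n → E | y k ∈ t} := by
    ext p; simp [Set.mem_prod]
  rw [hpre, Measure.prod_prod, pi_eval_measure P k ht]

theorem mp_fst {X Y : Type*} [MeasurableSpace X] [MeasurableSpace Y]
    (μ : Measure X) (κ : Measure Y) [SigmaFinite μ] [IsProbabilityMeasure κ] :
    MeasurePreserving (Prod.fst : X × Y → X) (μ.prod κ) μ :=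
  ⟨measurable_fst, by simp⟩




theorem mp_sw0 (k : Fin n) :
    MeasurePreserving (fun p : (Fin n → E) × (Fin n → E) =>
        (Function.update p.1 k (p.2 k), Function.update p.2 k (p.1 k)))
      ((Measure.pi fun _ : Fin n => P).prod (Measure.pi fun _ : Fin n => P))
      ((Measure.pi fun _ : Fin n => P).prod (Measure.pi fun _ : Fin n => P)) := by
  classical
  have h1 := measurePreserving_sumPiEquivProdPi (X := fun _ : Fin n ⊕ Fin n => E)
    (fun _ => P)
  have h2 := measurePreserving_sumPiEquivProdPi_symm (X := fun _ : Fin n ⊕ Fin n => E)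
    (fun _ => P)
  have h3 := mp_permGen (E := E) P (Equiv.swap (Sum.inl k) (Sum.inr k) : Equiv.Perm (Fin n ⊕ Fin n))
  have hcomp : (fun p : (Fin n → E) × (Fin n → E) =>
        (Function.update p.1 k (p.2 k), Function.update p.2 k (p.1 k)))
      = (MeasurableEquiv.sumPiEquivProdPi (fun _ : Fin n ⊕ Fin n => E)) ∘
        ((fun w : (Fin n ⊕ Fin n) → E => w ∘ (Equiv.swap (Sum.inl k) (Sum.inr k))) ∘
         (MeasurableEquiv.sumPiEquivProdPi (fun _ : Fin n ⊕ Fin n => E)).symm) := by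
    funext p
    have hswl : ∀ i : Fin n, (Equiv.swap (Sum.inl k) (Sum.inr k)) (Sum.inl i : Fin n ⊕ Fin n)
        = if i = k then Sum.inr k else Sum.inl i := by
      intro i
      by_cases h : i = k
      · subst h; simp
      · rw [Equiv.swap_apply_of_ne_of_ne (by simpa using h) (by simp)]
        simp [h]
    have hswr : ∀ i : Fin n, (Equiv.swap (Sum.inl k) (Sum.inr k)) (Sum.inr i : Fin n ⊕ Fin n)
        = if i = k then Sum.inl k else Sum.inr i := by
      intro i
      by_cases h : i = k
      · subst h; simp
      · rw [Equiv.swap_apply_of_ne_of_ne (by simp) (by simpa using h)]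
        simp [h]
    ext i
    · simp only [Function.comp_apply, MeasurableEquiv.sumPiEquivProdPi,
        MeasurableEquiv.coe_mk, Equiv.sumPiEquivProdPi, Equiv.coe_fn_mk,
        MeasurableEquiv.symm_mk, Equiv.coe_fn_symm_mk, Function.update_apply, hswl]
      by_cases h : i = k <;> simp [h]
    · simp only [Function.comp_apply, MeasurableEquiv.sumPiEquivProdPi,
        MeasurableEquiv.coe_mk, Equiv.sumPiEquivProdPi, Equiv.coe_fn_mk,
        MeasurableEquiv.symm_mk, Equiv.coe_fn_symm_mk, Function.update_apply, hswr]
      by_cases h : i = k <;> simp [h]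
  rw [hcomp]
  exact h1.comp (h3.comp h2)

theorem integrable_mul_of_memℒp_two {X : Type*} [MeasurableSpace X] {μ : Measure X}
    {g1 g2 : X → ℝ} (h1 : MemLp g1 2 μ) (h2 : MemLp g2 2 μ) :
    Integrable (fun x => g1 x * g2 x) μ := by
  have hi1 := h1.integrable_sq
  have hi2 := h2.integrable_sq
  refine Integrable.mono' ((hi1.add hi2).div_const 2)
    (h1.aestronglyMeasurable.mul h2.aestronglyMeasurable)
    (Filter.Eventually.of_forall fun x => ?_)
  rw [Real.norm_eq_abs, abs_mul]
  simp only [Pi.add_apply]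
  nlinarith [sq_nonneg (|g1 x| - |g2 x|), sq_abs (g1 x), sq_abs (g2 x),
    abs_nonneg (g1 x), abs_nonneg (g2 x)]

theorem ae_sq_integral_slice_le {X Y : Type*} [MeasurableSpace X] [MeasurableSpace Y]
    {μ : Measure X} {κ : Measure Y} [SFinite μ] [IsProbabilityMeasure κ]
    {g : X × Y → ℝ} (hg : StronglyMeasurable g)
    (hg2 : Integrable (fun p => g p ^ 2) (μ.prod κ)) :
    ∀ᵐ x ∂μ, (∫ y, g (x, y) ∂κ) ^ 2 ≤ ∫ y, g (x, y) ^ 2 ∂κ := by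
  filter_upwards [hg2.prod_right_ae] with x hx
  have hsm : AEStronglyMeasurable (fun y => g (x, y)) κ :=
    (hg.comp_measurable measurable_prodMk_left).aestronglyMeasurable
  have hL2 : MemLp (fun y => g (x, y)) 2 κ := (memLp_two_iff_integrable_sq hsm).2 hx
  have h := variance_nonneg (fun y => g (x, y)) κ
  rw [variance_eq_sub hL2] at h
  simp only [Pi.pow_apply] at h
  linarith

theorem integral_sq_integral_le {X Y : Type*} [MeasurableSpace X] [MeasurableSpace Y]
    {μ : Measure X} {κ : Measure Y} [SFinite μ] [IsProbabilityMeasure κ]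
    {g : X × Y → ℝ} (hg : StronglyMeasurable g)
    (hg2 : Integrable (fun p => g p ^ 2) (μ.prod κ)) :
    ∫ x, (∫ y, g (x, y) ∂κ) ^ 2 ∂μ ≤ ∫ p, g p ^ 2 ∂(μ.prod κ) := by
  have hB : Integrable (fun x => ∫ y, g (x, y) ^ 2 ∂κ) μ := by
    have : Integrable (fun p : X × Y => g p ^ 2) (μ.prod κ) := hg2
    exact this.integral_prod_left
  have hA : Integrable (fun x => (∫ y, g (x, y) ∂κ) ^ 2) μ := by
    refine Integrable.mono' hB ?_ ?_
    · exact ((hg.integral_prod_right').pow 2).aestronglyMeasurable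
    · filter_upwards [ae_sq_integral_slice_le hg hg2] with x hx
      rw [Real.norm_eq_abs, abs_of_nonneg (sq_nonneg _)]
      exact hx
  calc ∫ x, (∫ y, g (x, y) ∂κ) ^ 2 ∂μ
      ≤ ∫ x, ∫ y, g (x, y) ^ 2 ∂κ ∂μ :=
        integral_mono_ae hA hB (ae_sq_integral_slice_le hg hg2)
    _ = ∫ p, g p ^ 2 ∂(μ.prod κ) := (integral_prod _ hg2).symm



-- pointwise md identities
theorem md_update_left (k : Fin n) (x y : Fin n → E) (t : E) :
    md (k : ℕ) (Function.update x k t, y) = Function.update (md (k : ℕ) (x, y)) k t := by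
  funext i
  rcases eq_or_ne i k with h | h
  · subst h; simp [md, Function.update_self]
  · have hv : (i : ℕ) = (k : ℕ) → False := fun hc => h (Fin.ext hc)
    by_cases hik : (i : ℕ) < (k : ℕ) <;>
      simp [md, Function.update_of_ne h, hik]

theorem md_succ_update_right (k : Fin n) (x y : Fin n → E) (t : E) :
    Function.update (md (k : ℕ) (x, y)) k t = md ((k : ℕ) + 1) (x, Function.update y k t) := by
  funext i
  rcases eq_or_ne i k with h | h
  · subst h; simp [md, Function.update_self]
  · have hv : ¬ (i : ℕ) = (k : ℕ) := fun hc => h (Fin.ext hc)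
    have : ((i : ℕ) < (k : ℕ) + 1) ↔ (i : ℕ) < (k : ℕ) := by omega
    by_cases hik : (i : ℕ) < (k : ℕ) <;>
      simp [md, Function.update_of_ne h, hik, this]

theorem md_succ_left_update (k : Fin n) (x y : Fin n → E) (t : E) :
    md ((k : ℕ) + 1) (Function.update x k t, y) = md ((k : ℕ) + 1) (x, y) := by
  funext i
  rcases eq_or_ne i k with h | h
  · subst h; simp [md]
  · have hv : ¬ (i : ℕ) = (k : ℕ) := fun hc => h (Fin.ext hc)
    by_cases hik : (i : ℕ) < (k : ℕ) + 1 <;>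
      simp [md, Function.update_of_ne h, hik]

theorem md_zero (p : (Fin n → E) × (Fin n → E)) : md 0 p = p.1 := by
  funext i; simp [md]

theorem md_top (p : (Fin n → E) × (Fin n → E)) : md n p = p.2 := by
  funext i; simp [md, i.isLt]

-- generic measure-preserving transfer lemmas
theorem mp_integral {X Y : Type*} [MeasurableSpace X] [MeasurableSpace Y]
    {μ : Measure X} {ν : Measure Y} {T : X → Y} (hT : MeasurePreserving T μ ν)
    {g : Y → ℝ} (hg : AEStronglyMeasurable g ν) :
    ∫ x, g (T x) ∂μ = ∫ y, g y ∂ν := by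
  have hg' : AEStronglyMeasurable g (μ.map T) := hT.map_eq.symm ▸ hg
  rw [← integral_map hT.measurable.aemeasurable hg', hT.map_eq]

theorem mp_memℒp {X Y : Type*} [MeasurableSpace X] [MeasurableSpace Y]
    {μ : Measure X} {ν : Measure Y} {T : X → Y} (hT : MeasurePreserving T μ ν)
    {g : Y → ℝ} (hg : AEStronglyMeasurable g ν) (hgL : MemLp g 2 ν) :
    MemLp (fun x => g (T x)) 2 μ := by
  have h1 : MemLp g 2 (μ.map T) := hT.map_eq.symm ▸ hgL
  have hg' : AEStronglyMeasurable g (μ.map T) := hT.map_eq.symm ▸ hg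
  exact (memLp_map_measure_iff hg' hT.measurable.aemeasurable).1 h1


/-! ### main development -/

section Main

variable (P : Measure E) [IsProbabilityMeasure P] (f : (Fin n → E) → ℝ)

def hh (k : ℕ) : (Fin n → E) → ℝ :=
  fun x => ∫ y, f (md k (x, y)) ∂(Measure.pi fun _ : Fin n => P)

def cc (k : Fin n) : (Fin n → E) × (Fin n → E) → ℝ :=
  fun p => ∫ t, f (Function.update (md (k : ℕ) p) k t) ∂P

variable {f}

theorem PhiL2 (hf : Measurable f) (hL2 : MemLp f 2 (Measure.pi fun _ : Fin n => P)) (k : ℕ) :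
    MemLp (fun p => f (md k p)) 2
      ((Measure.pi fun _ : Fin n => P).prod (Measure.pi fun _ : Fin n => P)) :=
  mp_memℒp (mp_md P k) hf.aestronglyMeasurable hL2

theorem hh_sm (hf : Measurable f) (k : ℕ) : StronglyMeasurable (hh P f k) := by
  have h : StronglyMeasurable fun p : (Fin n → E) × (Fin n → E) => f (md k p) :=
    (hf.comp (mdmeas k)).stronglyMeasurable
  exact h.integral_prod_right'

theorem hhL2 (hf : Measurable f) (hL2 : MemLp f 2 (Measure.pi fun _ : Fin n => P)) (k : ℕ) :
    MemLp (hh P f k) 2 (Measure.pi fun _ : Fin n => P) := by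
  refine (memLp_two_iff_integrable_sq (hh_sm P hf k).aestronglyMeasurable).2 ?_
  have hB : Integrable
      (fun x => ∫ y, f (md k (x, y)) ^ 2 ∂(Measure.pi fun _ : Fin n => P))
      (Measure.pi fun _ : Fin n => P) :=
    ((PhiL2 P hf hL2 k).integrable_sq).integral_prod_left
  refine Integrable.mono' hB ((hh_sm P hf k).pow 2).aestronglyMeasurable ?_
  filter_upwards [ae_sq_integral_slice_le (hf.comp (mdmeas k)).stronglyMeasurable
    (PhiL2 P hf hL2 k).integrable_sq] with x hx
  rw [Real.norm_eq_abs, abs_of_nonneg (sq_nonneg _)]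
  exact hx

theorem meas_G' (k : Fin n) :
    Measurable (fun q : ((Fin n → E) × (Fin n → E)) × E =>
      Function.update (md (k : ℕ) q.1) k q.2) :=
  measurable_update'.comp
    (((mdmeas (k : ℕ)).comp measurable_fst).prodMk measurable_snd)

theorem mp_G (k : Fin n) :
    MeasurePreserving (fun q : ((Fin n → E) × (Fin n → E)) × E =>
        Function.update (md (k : ℕ) q.1) k q.2)
      (((Measure.pi fun _ : Fin n => P).prod (Measure.pi fun _ : Fin n => P)).prod P)
      (Measure.pi fun _ : Fin n => P) := by
  have h := (mp_refresh P k).comp ((mp_md P (k : ℕ)).prod (MeasurePreserving.id P))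
  have hfun : ((fun q : (Fin n → E) × E => Function.update q.1 k q.2) ∘
      Prod.map (md (k : ℕ)) id) = fun q : ((Fin n → E) × (Fin n → E)) × E =>
        Function.update (md (k : ℕ) q.1) k q.2 := rfl
  exact hfun ▸ h

theorem GL2 (hf : Measurable f) (hL2 : MemLp f 2 (Measure.pi fun _ : Fin n => P)) (k : Fin n) :
    MemLp (fun q : ((Fin n → E) × (Fin n → E)) × E =>
        f (Function.update (md (k : ℕ) q.1) k q.2)) 2
      (((Measure.pi fun _ : Fin n => P).prod (Measure.pi fun _ : Fin n => P)).prod P) :=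
  mp_memℒp (mp_G P k) hf.aestronglyMeasurable hL2

theorem cc_sm (hf : Measurable f) (k : Fin n) : StronglyMeasurable (cc P f k) := by
  have h : StronglyMeasurable fun q : ((Fin n → E) × (Fin n → E)) × E =>
      f (Function.update (md (k : ℕ) q.1) k q.2) :=
    (hf.comp (meas_G' k)).stronglyMeasurable
  exact h.integral_prod_right'

theorem ccL2 (hf : Measurable f) (hL2 : MemLp f 2 (Measure.pi fun _ : Fin n => P)) (k : Fin n) :
    MemLp (cc P f k) 2
      ((Measure.pi fun _ : Fin n => P).prod (Measure.pi fun _ : Fin n => P)) := by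
  refine (memLp_two_iff_integrable_sq (cc_sm P hf k).aestronglyMeasurable).2 ?_
  have hB : Integrable
      (fun p => ∫ t, f (Function.update (md (k : ℕ) p) k t) ^ 2 ∂P)
      ((Measure.pi fun _ : Fin n => P).prod (Measure.pi fun _ : Fin n => P)) :=
    ((GL2 P hf hL2 k).integrable_sq).integral_prod_left
  refine Integrable.mono' hB ((cc_sm P hf k).pow 2).aestronglyMeasurable ?_
  filter_upwards [ae_sq_integral_slice_le (hf.comp (meas_G' k)).stronglyMeasurable
    (GL2 P hf hL2 k).integrable_sq] with p hp
  rw [Real.norm_eq_abs, abs_of_nonneg (sq_nonneg _)]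
  exact hp

end Main

section Main2

variable (P : Measure E) [IsProbabilityMeasure P] {f : (Fin n → E) → ℝ}

theorem mp_W (k : Fin n) :
    MeasurePreserving (fun q : (Fin n → E) × ((Fin n → E) × E) =>
        md ((k : ℕ) + 1) (q.1, Function.update q.2.1 k q.2.2))
      ((Measure.pi fun _ : Fin n => P).prod (((Measure.pi fun _ : Fin n => P)).prod P))
      (Measure.pi fun _ : Fin n => P) := by
  have h := (mp_md P ((k : ℕ) + 1)).comp
    ((MeasurePreserving.id (Measure.pi fun _ : Fin n => P)).prod (mp_refresh P k))
  have hfun : (md (n := n) ((k : ℕ) + 1) ∘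
      Prod.map id (fun q : (Fin n → E) × E => Function.update q.1 k q.2))
      = fun q : (Fin n → E) × ((Fin n → E) × E) =>
          md ((k : ℕ) + 1) (q.1, Function.update q.2.1 k q.2.2) := rfl
  exact hfun ▸ h

theorem hh_succ_update (k : Fin n) (x : Fin n → E) (t : E) :
    hh P f ((k : ℕ) + 1) (Function.update x k t) = hh P f ((k : ℕ) + 1) x := by
  unfold hh
  congr 1
  funext y
  rw [md_succ_left_update]

/-- the key almost-everywhere identities relating `hh k`, `hh (k+1)` and `cc k`. -/
theorem ae_W (hf : Measurable f) (hL2 : MemLp f 2 (Measure.pi fun _ : Fin n => P)) (k : Fin n) :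
    ∀ᵐ x ∂(Measure.pi fun _ : Fin n => P),
      (∫ t, hh P f (k : ℕ) (Function.update x k t) ∂P = hh P f ((k : ℕ) + 1) x) ∧
      (∫ y, cc P f k (x, y) ∂(Measure.pi fun _ : Fin n => P) = hh P f ((k : ℕ) + 1) x) := by
  set π := (Measure.pi fun _ : Fin n => P) with hπ
  set W : (Fin n → E) × ((Fin n → E) × E) → ℝ :=
    fun q => f (md ((k : ℕ) + 1) (q.1, Function.update q.2.1 k q.2.2)) with hW
  have hWL2 : MemLp W 2 (π.prod (π.prod P)) :=
    mp_memℒp (mp_W P k) hf.aestronglyMeasurable hL2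
  have hWi : Integrable W (π.prod (π.prod P)) := hWL2.integrable one_le_two
  filter_upwards [hWi.prod_right_ae] with x hx
  -- hx : Integrable (fun r => W (x, r)) (π.prod P)
  have hend : ∫ r, W (x, r) ∂(π.prod P) = hh P f ((k : ℕ) + 1) x := by
    have hg : AEStronglyMeasurable (fun y' => f (md ((k : ℕ) + 1) (x, y'))) π := by
      refine (hf.comp ?_).aestronglyMeasurable
      exact (mdmeas ((k : ℕ) + 1)).comp measurable_prodMk_left
    exact mp_integral (mp_refresh P k) hg
  constructor
  · have h1 : ∀ t, hh P f (k : ℕ) (Function.update x k t) = ∫ y, W (x, (y, t)) ∂π := by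
      intro t
      unfold hh
      congr 1
      funext y
      rw [md_update_left, md_succ_update_right]
    calc ∫ t, hh P f (k : ℕ) (Function.update x k t) ∂P
        = ∫ t, ∫ y, W (x, (y, t)) ∂π ∂P := by
          congr 1; funext t; exact h1 t
      _ = ∫ y, ∫ t, W (x, (y, t)) ∂P ∂π := by
          exact (integral_integral_swap hx).symm
      _ = ∫ r, W (x, r) ∂(π.prod P) := (integral_prod _ hx).symm
      _ = hh P f ((k : ℕ) + 1) x := hend
  · have h2 : ∀ y, cc P f k (x, y) = ∫ t, W (x, (y, t)) ∂P := by
      intro y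
      unfold cc
      congr 1
      funext t
      rw [md_succ_update_right]
    calc ∫ y, cc P f k (x, y) ∂π
        = ∫ y, ∫ t, W (x, (y, t)) ∂P ∂π := by
          congr 1; funext y; exact h2 y
      _ = ∫ r, W (x, r) ∂(π.prod P) := (integral_prod _ hx).symm
      _ = hh P f ((k : ℕ) + 1) x := hend

theorem orth (hf : Measurable f) (hL2 : MemLp f 2 (Measure.pi fun _ : Fin n => P)) (k : Fin n) :
    ∫ x, hh P f (k : ℕ) x * hh P f ((k : ℕ) + 1) x ∂(Measure.pi fun _ : Fin n => P)
      = ∫ x, hh P f ((k : ℕ) + 1) x ^ 2 ∂(Measure.pi fun _ : Fin n => P) := by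
  set π := (Measure.pi fun _ : Fin n => P) with hπ
  have hu := mp_refresh P k
  have hk1 : MemLp (fun q : (Fin n → E) × E => hh P f (k : ℕ) (Function.update q.1 k q.2)) 2
      (π.prod P) := mp_memℒp hu (hh_sm P hf _).aestronglyMeasurable (hhL2 P hf hL2 _)
  have hk2 : MemLp (fun q : (Fin n → E) × E => hh P f ((k : ℕ) + 1) q.1) 2 (π.prod P) :=
    mp_memℒp (mp_fst π P) (hh_sm P hf _).aestronglyMeasurable (hhL2 P hf hL2 _)
  have hint : Integrable (fun q : (Fin n → E) × E =>
      hh P f (k : ℕ) (Function.update q.1 k q.2) * hh P f ((k : ℕ) + 1) q.1) (π.prod P) :=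
    integrable_mul_of_memℒp_two hk1 hk2
  calc ∫ x, hh P f (k : ℕ) x * hh P f ((k : ℕ) + 1) x ∂π
      = ∫ q, hh P f (k : ℕ) (Function.update q.1 k q.2) *
          hh P f ((k : ℕ) + 1) (Function.update q.1 k q.2) ∂(π.prod P) :=
        (mp_integral hu ((hh_sm P hf _).mul (hh_sm P hf _)).aestronglyMeasurable).symm
    _ = ∫ q, hh P f (k : ℕ) (Function.update q.1 k q.2) *
          hh P f ((k : ℕ) + 1) q.1 ∂(π.prod P) := by
        congr 1; funext q; rw [hh_succ_update]
    _ = ∫ x, ∫ t, hh P f (k : ℕ) (Function.update x k t) *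
          hh P f ((k : ℕ) + 1) x ∂P ∂π := integral_prod _ hint
    _ = ∫ x, (∫ t, hh P f (k : ℕ) (Function.update x k t) ∂P) *
          hh P f ((k : ℕ) + 1) x ∂π := by
        congr 1; funext x; exact integral_mul_const _ _
    _ = ∫ x, hh P f ((k : ℕ) + 1) x ^ 2 ∂π := by
        refine integral_congr_ae ?_
        filter_upwards [ae_W P hf hL2 k] with x hx
        rw [hx.1]; ring

end Main2

section Main3

variable (P : Measure E) [IsProbabilityMeasure P] {f : (Fin n → E) → ℝ}

theorem sq_diff (hf : Measurable f) (hL2 : MemLp f 2 (Measure.pi fun _ : Fin n => P))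
    (k : Fin n) :
    ∫ x, (hh P f (k : ℕ) x - hh P f ((k : ℕ) + 1) x) ^ 2 ∂(Measure.pi fun _ : Fin n => P)
      = (∫ x, hh P f (k : ℕ) x ^ 2 ∂(Measure.pi fun _ : Fin n => P))
        - ∫ x, hh P f ((k : ℕ) + 1) x ^ 2 ∂(Measure.pi fun _ : Fin n => P) := by
  set π := (Measure.pi fun _ : Fin n => P) with hπ
  have ia : Integrable (fun x => hh P f (k : ℕ) x ^ 2) π := (hhL2 P hf hL2 _).integrable_sq
  have ib : Integrable (fun x => hh P f ((k : ℕ) + 1) x ^ 2) π := (hhL2 P hf hL2 _).integrable_sq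
  have iab : Integrable (fun x => hh P f (k : ℕ) x * hh P f ((k : ℕ) + 1) x) π :=
    integrable_mul_of_memℒp_two (hhL2 P hf hL2 _) (hhL2 P hf hL2 _)
  have e1 : (fun x => (hh P f (k : ℕ) x - hh P f ((k : ℕ) + 1) x) ^ 2)
      = fun x => hh P f (k : ℕ) x ^ 2
        - 2 * (hh P f (k : ℕ) x * hh P f ((k : ℕ) + 1) x) + hh P f ((k : ℕ) + 1) x ^ 2 := by
    funext x; ring
  have isub : Integrable (fun x => hh P f (k : ℕ) x ^ 2
      - 2 * (hh P f (k : ℕ) x * hh P f ((k : ℕ) + 1) x)) π := by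
    exact ia.sub (iab.const_mul 2)
  rw [e1, integral_add isub ib, integral_sub ia (iab.const_mul 2),
    integral_const_mul, orth P hf hL2 k]
  ring

theorem ae_repr (hf : Measurable f) (hL2 : MemLp f 2 (Measure.pi fun _ : Fin n => P))
    (k : Fin n) :
    ∀ᵐ x ∂(Measure.pi fun _ : Fin n => P),
      hh P f (k : ℕ) x - hh P f ((k : ℕ) + 1) x
        = ∫ y, (f (md (k : ℕ) (x, y)) - cc P f k (x, y)) ∂(Measure.pi fun _ : Fin n => P) := by
  set π := (Measure.pi fun _ : Fin n => P) with hπ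
  have hΦ1 : Integrable (fun p : (Fin n → E) × (Fin n → E) => f (md (k : ℕ) p)) (π.prod π) :=
    (PhiL2 P hf hL2 _).integrable one_le_two
  have hc1 : Integrable (cc P f k) (π.prod π) := (ccL2 P hf hL2 k).integrable one_le_two
  filter_upwards [ae_W P hf hL2 k, hΦ1.prod_right_ae, hc1.prod_right_ae] with x hx hxΦ hxc
  rw [integral_sub hxΦ hxc, ← hx.2]
  rfl

theorem jensen_step (hf : Measurable f) (hL2 : MemLp f 2 (Measure.pi fun _ : Fin n => P))
    (k : Fin n) :
    ∫ x, (hh P f (k : ℕ) x - hh P f ((k : ℕ) + 1) x) ^ 2 ∂(Measure.pi fun _ : Fin n => P)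
      ≤ ∫ p, (f (md (k : ℕ) p) - cc P f k p) ^ 2
          ∂((Measure.pi fun _ : Fin n => P).prod (Measure.pi fun _ : Fin n => P)) := by
  set π := (Measure.pi fun _ : Fin n => P) with hπ
  have hgsm : StronglyMeasurable fun p : (Fin n → E) × (Fin n → E) =>
      f (md (k : ℕ) p) - cc P f k p :=
    (hf.comp (mdmeas _)).stronglyMeasurable.sub (cc_sm P hf k)
  have hg2 : Integrable (fun p : (Fin n → E) × (Fin n → E) =>
      (f (md (k : ℕ) p) - cc P f k p) ^ 2) (π.prod π) :=
    ((PhiL2 P hf hL2 _).sub (ccL2 P hf hL2 k)).integrable_sq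
  have h1 : ∫ x, (hh P f (k : ℕ) x - hh P f ((k : ℕ) + 1) x) ^ 2 ∂π
      = ∫ x, (∫ y, (f (md (k : ℕ) (x, y)) - cc P f k (x, y)) ∂π) ^ 2 ∂π := by
    refine integral_congr_ae ?_
    filter_upwards [ae_repr P hf hL2 k] with x hx
    rw [hx]
  rw [h1]
  exact integral_sq_integral_le hgsm hg2

theorem cc_update_left (k : Fin n) (x y : Fin n → E) (t : E) :
    cc P f k (Function.update x k t, y) = cc P f k (x, y) := by
  unfold cc
  congr 1
  funext t'
  rw [md_update_left, Function.update_idem]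

theorem key_cross (hf : Measurable f) (hL2 : MemLp f 2 (Measure.pi fun _ : Fin n => P))
    (k : Fin n) :
    ∫ p, f (md (k : ℕ) p) * cc P f k p
        ∂((Measure.pi fun _ : Fin n => P).prod (Measure.pi fun _ : Fin n => P))
      = ∫ p, cc P f k p ^ 2
        ∂((Measure.pi fun _ : Fin n => P).prod (Measure.pi fun _ : Fin n => P)) := by
  set π := (Measure.pi fun _ : Fin n => P) with hπ
  have mpθ : MeasurePreserving
      (fun q : (Fin n → E) × ((Fin n → E) × E) => (Function.update q.2.1 k q.2.2, q.1))
      (π.prod (π.prod P)) (π.prod π) := by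
    have h := Measure.measurePreserving_swap.comp ((MeasurePreserving.id π).prod (mp_refresh P k))
    have hfun : ((Prod.swap : (Fin n → E) × (Fin n → E) → (Fin n → E) × (Fin n → E)) ∘
        Prod.map id (fun q : (Fin n → E) × E => Function.update q.1 k q.2))
        = fun q : (Fin n → E) × ((Fin n → E) × E) =>
            (Function.update q.2.1 k q.2.2, q.1) := rfl
    exact hfun ▸ h
  have mpθ' : MeasurePreserving
      (fun q : (Fin n → E) × ((Fin n → E) × E) => (q.2.1, q.1))
      (π.prod (π.prod P)) (π.prod π) := by
    have h := Measure.measurePreserving_swap.comp ((MeasurePreserving.id π).prod (mp_fst π P))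
    have hfun : ((Prod.swap : (Fin n → E) × (Fin n → E) → (Fin n → E) × (Fin n → E)) ∘
        Prod.map id (Prod.fst : (Fin n → E) × E → Fin n → E))
        = fun q : (Fin n → E) × ((Fin n → E) × E) => (q.2.1, q.1) := rfl
    exact hfun ▸ h
  have h1 : MemLp (fun q : (Fin n → E) × ((Fin n → E) × E) =>
      f (md (k : ℕ) (Function.update q.2.1 k q.2.2, q.1))) 2 (π.prod (π.prod P)) :=
    mp_memℒp mpθ (hf.comp (mdmeas _)).aestronglyMeasurable (PhiL2 P hf hL2 _)
  have h2 : MemLp (fun q : (Fin n → E) × ((Fin n → E) × E) =>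
      cc P f k (q.2.1, q.1)) 2 (π.prod (π.prod P)) :=
    mp_memℒp mpθ' (cc_sm P hf k).aestronglyMeasurable (ccL2 P hf hL2 k)
  have hintS : Integrable (fun q : (Fin n → E) × ((Fin n → E) × E) =>
      f (md (k : ℕ) (Function.update q.2.1 k q.2.2, q.1)) * cc P f k (q.2.1, q.1))
      (π.prod (π.prod P)) := integrable_mul_of_memℒp_two h1 h2
  have hccsw : MemLp (fun q : (Fin n → E) × (Fin n → E) => cc P f k (q.2, q.1)) 2
      (π.prod π) :=
    mp_memℒp Measure.measurePreserving_swap (cc_sm P hf k).aestronglyMeasurable (ccL2 P hf hL2 k)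
  calc ∫ p, f (md (k : ℕ) p) * cc P f k p ∂(π.prod π)
      = ∫ q, f (md (k : ℕ) (Function.update q.2.1 k q.2.2, q.1)) *
          cc P f k (Function.update q.2.1 k q.2.2, q.1) ∂(π.prod (π.prod P)) :=
        (mp_integral mpθ (((hf.comp (mdmeas _)).stronglyMeasurable.mul
          (cc_sm P hf k)).aestronglyMeasurable)).symm
    _ = ∫ q, f (md (k : ℕ) (Function.update q.2.1 k q.2.2, q.1)) *
          cc P f k (q.2.1, q.1) ∂(π.prod (π.prod P)) := by
        congr 1; funext q; rw [cc_update_left]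
    _ = ∫ y, ∫ r, f (md (k : ℕ) (Function.update r.1 k r.2, y)) *
          cc P f k (r.1, y) ∂(π.prod P) ∂π := integral_prod _ hintS
    _ = ∫ y, ∫ x, cc P f k (x, y) ^ 2 ∂π ∂π := by
        refine integral_congr_ae ?_
        filter_upwards [hintS.prod_right_ae] with y hy
        rw [integral_prod _ hy]
        congr 1; funext x
        show (∫ t, f (md (k : ℕ) (Function.update x k t, y)) * cc P f k (x, y) ∂P)
          = cc P f k (x, y) ^ 2
        rw [integral_mul_const]
        have hcc : ∫ t, f (md (k : ℕ) (Function.update x k t, y)) ∂P = cc P f k (x, y) := by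
          unfold cc
          congr 1
          funext t
          rw [md_update_left]
        rw [hcc]; ring
    _ = ∫ q, cc P f k (q.2, q.1) ^ 2 ∂(π.prod π) := (integral_prod _ hccsw.integrable_sq).symm
    _ = ∫ p, cc P f k p ^ 2 ∂(π.prod π) :=
        mp_integral Measure.measurePreserving_swap (g := fun p => cc P f k p ^ 2)
          (((cc_sm P hf k).pow 2).aestronglyMeasurable)

end Main3

section Main4

variable (P : Measure E) [IsProbabilityMeasure P] {f : (Fin n → E) → ℝ}

theorem cross_to_Dhat (hf : Measurable f) (hL2 : MemLp f 2 (Measure.pi fun _ : Fin n => P))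
    (k : Fin n) :
    ∫ p, f (md (k : ℕ) p) * cc P f k p
        ∂((Measure.pi fun _ : Fin n => P).prod (Measure.pi fun _ : Fin n => P))
      = ∫ q : (Fin n → E) × E, f q.1 * f (Function.update q.1 k q.2)
        ∂((Measure.pi fun _ : Fin n => P).prod P) := by
  set π := (Measure.pi fun _ : Fin n => P) with hπ
  have hΦf : MemLp (fun q : ((Fin n → E) × (Fin n → E)) × E => f (md (k : ℕ) q.1)) 2
      ((π.prod π).prod P) :=
    mp_memℒp (mp_fst (π.prod π) P) (hf.comp (mdmeas _)).aestronglyMeasurable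
      (PhiL2 P hf hL2 _)
  have hint : Integrable (fun q : ((Fin n → E) × (Fin n → E)) × E =>
      f (md (k : ℕ) q.1) * f (Function.update (md (k : ℕ) q.1) k q.2)) ((π.prod π).prod P) :=
    integrable_mul_of_memℒp_two hΦf (GL2 P hf hL2 k)
  calc ∫ p, f (md (k : ℕ) p) * cc P f k p ∂(π.prod π)
      = ∫ p, ∫ t, f (md (k : ℕ) p) * f (Function.update (md (k : ℕ) p) k t) ∂P ∂(π.prod π) := by
        congr 1; funext p
        rw [integral_const_mul]
        rfl
    _ = ∫ q, f (md (k : ℕ) q.1) * f (Function.update (md (k : ℕ) q.1) k q.2)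
          ∂((π.prod π).prod P) := (integral_prod _ hint).symm
    _ = ∫ q : (Fin n → E) × E, f q.1 * f (Function.update q.1 k q.2) ∂(π.prod P) := by
        have mpT : MeasurePreserving (Prod.map (md (k : ℕ)) (id : E → E))
            ((π.prod π).prod P) (π.prod P) :=
          (mp_md P (k : ℕ)).prod (MeasurePreserving.id P)
        have hg : AEStronglyMeasurable
            (fun q : (Fin n → E) × E => f q.1 * f (Function.update q.1 k q.2)) (π.prod P) :=
          ((hf.comp measurable_fst).mul (hf.comp measurable_update')).aestronglyMeasurable
        exact mp_integral mpT hg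

theorem Dhat_eq (hf : Measurable f)
    (hsymm : ∀ (e : Equiv.Perm (Fin n)) (v : Fin n → E), f (v ∘ e) = f v) (j k : Fin n) :
    ∫ q : (Fin n → E) × E, f q.1 * f (Function.update q.1 j q.2)
        ∂((Measure.pi fun _ : Fin n => P).prod P)
      = ∫ q : (Fin n → E) × E, f q.1 * f (Function.update q.1 k q.2)
        ∂((Measure.pi fun _ : Fin n => P).prod P) := by
  classical
  set π := (Measure.pi fun _ : Fin n => P) with hπ
  have hkey : ∀ (z : Fin n → E) (t : E),
      Function.update (z ∘ (Equiv.swap j k : Equiv.Perm (Fin n))) j t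
        = (Function.update z k t) ∘ (Equiv.swap j k : Equiv.Perm (Fin n)) := by
    intro z t; funext i
    by_cases h : i = j
    · rw [h]
      simp only [Function.comp_apply, Function.update_self]
      rw [Equiv.swap_apply_left, Function.update_self]
    · have h2 : (Equiv.swap j k : Equiv.Perm (Fin n)) i ≠ k := fun hc =>
        h ((Equiv.swap j k).injective (hc.trans (Equiv.swap_apply_left j k).symm))
      simp [Function.comp, Function.update_of_ne h, Function.update_of_ne h2]
  have mpT : MeasurePreserving
      (Prod.map (fun z : Fin n → E => z ∘ (Equiv.swap j k : Equiv.Perm (Fin n))) (id : E → E))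
      (π.prod P) (π.prod P) :=
    (mp_permGen P (Equiv.swap j k)).prod (MeasurePreserving.id P)
  have hg : AEStronglyMeasurable
      (fun q : (Fin n → E) × E => f q.1 * f (Function.update q.1 j q.2)) (π.prod P) :=
    ((hf.comp measurable_fst).mul (hf.comp measurable_update')).aestronglyMeasurable
  have h0 := mp_integral mpT hg
  rw [← h0]
  congr 1; funext q
  show f (q.1 ∘ (Equiv.swap j k : Equiv.Perm (Fin n))) *
        f (Function.update (q.1 ∘ (Equiv.swap j k : Equiv.Perm (Fin n))) j q.2)
      = f q.1 * f (Function.update q.1 k q.2)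
  rw [hkey, hsymm (Equiv.swap j k), hsymm (Equiv.swap j k)]

theorem RkSq (hf : Measurable f) (hL2 : MemLp f 2 (Measure.pi fun _ : Fin n => P))
    (k : Fin n) :
    ∫ p, (f (md (k : ℕ) p) - cc P f k p) ^ 2
        ∂((Measure.pi fun _ : Fin n => P).prod (Measure.pi fun _ : Fin n => P))
      = (∫ x, f x ^ 2 ∂(Measure.pi fun _ : Fin n => P))
        - ∫ q : (Fin n → E) × E, f q.1 * f (Function.update q.1 k q.2)
            ∂((Measure.pi fun _ : Fin n => P).prod P) := by
  set π := (Measure.pi fun _ : Fin n => P) with hπ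
  have iΦ2 : Integrable (fun p => f (md (k : ℕ) p) ^ 2) (π.prod π) :=
    (PhiL2 P hf hL2 _).integrable_sq
  have ic2 : Integrable (fun p => cc P f k p ^ 2) (π.prod π) := (ccL2 P hf hL2 k).integrable_sq
  have iΦc : Integrable (fun p => f (md (k : ℕ) p) * cc P f k p) (π.prod π) :=
    integrable_mul_of_memℒp_two (PhiL2 P hf hL2 _) (ccL2 P hf hL2 k)
  have e1 : (fun p => (f (md (k : ℕ) p) - cc P f k p) ^ 2)
      = fun p => f (md (k : ℕ) p) ^ 2 - 2 * (f (md (k : ℕ) p) * cc P f k p)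
          + cc P f k p ^ 2 := by
    funext p; ring
  have isub : Integrable (fun p => f (md (k : ℕ) p) ^ 2
      - 2 * (f (md (k : ℕ) p) * cc P f k p)) (π.prod π) := by
    exact iΦ2.sub (iΦc.const_mul 2)
  have hexp : ∫ p, (f (md (k : ℕ) p) - cc P f k p) ^ 2 ∂(π.prod π)
      = (∫ p, f (md (k : ℕ) p) ^ 2 ∂(π.prod π))
        - 2 * (∫ p, f (md (k : ℕ) p) * cc P f k p ∂(π.prod π))
        + ∫ p, cc P f k p ^ 2 ∂(π.prod π) := by
    rw [e1, integral_add isub ic2, integral_sub iΦ2 (iΦc.const_mul 2), integral_const_mul]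
  have hM2 : ∫ p, f (md (k : ℕ) p) ^ 2 ∂(π.prod π) = ∫ x, f x ^ 2 ∂π :=
    mp_integral (mp_md P (k : ℕ)) (g := fun z => f z ^ 2)
      ((hf.pow measurable_const).aestronglyMeasurable)
  have hkc := key_cross P hf hL2 k
  have hcd := cross_to_Dhat P hf hL2 k
  rw [hexp, hM2]
  linarith

theorem step_bound (hf : Measurable f) (hL2 : MemLp f 2 (Measure.pi fun _ : Fin n => P))
    (hsymm : ∀ (e : Equiv.Perm (Fin n)) (v : Fin n → E), f (v ∘ e) = f v)
    (k k0 : Fin n) :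
    (∫ x, hh P f (k : ℕ) x ^ 2 ∂(Measure.pi fun _ : Fin n => P))
      - (∫ x, hh P f ((k : ℕ) + 1) x ^ 2 ∂(Measure.pi fun _ : Fin n => P))
      ≤ (∫ x, f x ^ 2 ∂(Measure.pi fun _ : Fin n => P))
        - ∫ q : (Fin n → E) × E, f q.1 * f (Function.update q.1 k0 q.2)
            ∂((Measure.pi fun _ : Fin n => P).prod P) := by
  rw [← sq_diff P hf hL2 k]
  refine le_trans (jensen_step P hf hL2 k) ?_
  rw [RkSq P hf hL2 k, Dhat_eq P hf hsymm k k0]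

end Main4

section Main5

variable (P : Measure E) [IsProbabilityMeasure P] {f : (Fin n → E) → ℝ}

theorem hh_zero : hh P f 0 = f := by
  funext x
  unfold hh
  have h : (fun y : Fin n → E => f (md 0 (x, y))) = fun _ => f x := by
    funext y; rw [md_zero]
  rw [h, integral_const]
  simp

theorem hh_top : hh P f n = fun _ => ∫ y, f y ∂(Measure.pi fun _ : Fin n => P) := by
  funext x
  unfold hh
  congr 1
  funext y
  rw [md_top]

theorem max_sq_add (a b : ℝ) : max (a - b) 0 ^ 2 + max (b - a) 0 ^ 2 = (a - b) ^ 2 := by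
  rcases le_total a b with h | h
  · rw [max_eq_right (by linarith), max_eq_left (by linarith)]; ring
  · rw [max_eq_left (by linarith), max_eq_right (by linarith)]; ring

theorem max_sq_le (a : ℝ) : max a 0 ^ 2 ≤ a ^ 2 := by
  rcases le_total a 0 with h | h
  · rw [max_eq_right h]
    simpa using sq_nonneg a
  · rw [max_eq_left h]

theorem prod_side (hn : 0 < n) (hf : Measurable f)
    (hL2 : MemLp f 2 (Measure.pi fun _ : Fin n => P))
    (hsymm : ∀ (e : Equiv.Perm (Fin n)) (v : Fin n → E), f (v ∘ e) = f v) :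
    (∫ x, f x ^ 2 ∂(Measure.pi fun _ : Fin n => P))
      - (∫ x, f x ∂(Measure.pi fun _ : Fin n => P)) ^ 2
    ≤ n * ∫ p, max (f p.1 - f (Function.update p.1 ⟨0, hn⟩ (p.2 ⟨0, hn⟩))) 0 ^ 2
        ∂((Measure.pi fun _ : Fin n => P).prod (Measure.pi fun _ : Fin n => P)) := by
  classical
  set π := (Measure.pi fun _ : Fin n => P) with hπ
  set k0 : Fin n := ⟨0, hn⟩ with hk0
  set D := ∫ q : (Fin n → E) × E, f q.1 * f (Function.update q.1 k0 q.2) ∂(π.prod P) with hD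
  set M2 := ∫ x, f x ^ 2 ∂π with hM2
  -- the Ψ map is measure preserving
  have mpΨ : MeasurePreserving
      (fun p : (Fin n → E) × (Fin n → E) => Function.update p.1 k0 (p.2 k0))
      (π.prod π) π := by
    have h := (mp_refresh P k0).comp (mp_eval P k0)
    have hfun : ((fun q : (Fin n → E) × E => Function.update q.1 k0 q.2) ∘
        (fun p : (Fin n → E) × (Fin n → E) => (p.1, p.2 k0)))
        = fun p : (Fin n → E) × (Fin n → E) => Function.update p.1 k0 (p.2 k0) := rfl
    exact hfun ▸ h
  have ΨL2 : MemLp (fun p : (Fin n → E) × (Fin n → E) =>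
      f (Function.update p.1 k0 (p.2 k0))) 2 (π.prod π) :=
    mp_memℒp mpΨ hf.aestronglyMeasurable hL2
  have ΦL2 : MemLp (fun p : (Fin n → E) × (Fin n → E) => f p.1) 2 (π.prod π) :=
    mp_memℒp (mp_fst π π) hf.aestronglyMeasurable hL2
  have mΨ : Measurable (fun p : (Fin n → E) × (Fin n → E) =>
      f (Function.update p.1 k0 (p.2 k0))) := hf.comp mpΨ.measurable
  have mΦ : Measurable (fun p : (Fin n → E) × (Fin n → E) => f p.1) := hf.comp measurable_fst
  have idiff2 : Integrable (fun p : (Fin n → E) × (Fin n → E) =>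
      (f p.1 - f (Function.update p.1 k0 (p.2 k0))) ^ 2) (π.prod π) :=
    (ΦL2.sub ΨL2).integrable_sq
  have imax1 : Integrable (fun p : (Fin n → E) × (Fin n → E) =>
      max (f p.1 - f (Function.update p.1 k0 (p.2 k0))) 0 ^ 2) (π.prod π) := by
    refine Integrable.mono' idiff2 (((mΦ.sub mΨ).max measurable_const).pow
      measurable_const).aestronglyMeasurable (Filter.Eventually.of_forall fun p => ?_)
    rw [Real.norm_eq_abs, abs_of_nonneg (sq_nonneg _)]
    exact max_sq_le _
  have imax2 : Integrable (fun p : (Fin n → E) × (Fin n → E) =>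
      max (f (Function.update p.1 k0 (p.2 k0)) - f p.1) 0 ^ 2) (π.prod π) := by
    refine Integrable.mono' idiff2 (((mΨ.sub mΦ).max measurable_const).pow
      measurable_const).aestronglyMeasurable (Filter.Eventually.of_forall fun p => ?_)
    rw [Real.norm_eq_abs, abs_of_nonneg (sq_nonneg _)]
    have := max_sq_le (f (Function.update p.1 k0 (p.2 k0)) - f p.1)
    nlinarith [this]
  -- swap symmetry
  have hswap_eq : ∫ p, max (f p.1 - f (Function.update p.1 k0 (p.2 k0))) 0 ^ 2 ∂(π.prod π)
      = ∫ p, max (f (Function.update p.1 k0 (p.2 k0)) - f p.1) 0 ^ 2 ∂(π.prod π) := by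
    have hg : AEStronglyMeasurable (fun p : (Fin n → E) × (Fin n → E) =>
        max (f p.1 - f (Function.update p.1 k0 (p.2 k0))) 0 ^ 2) (π.prod π) :=
      (((mΦ.sub mΨ).max measurable_const).pow measurable_const).aestronglyMeasurable
    have h1 := mp_integral (mp_sw0 P k0) hg
    rw [← h1]
    congr 1
    funext p
    have e1 : (Function.update p.2 k0 (p.1 k0)) k0 = p.1 k0 := Function.update_self _ _ _
    have e2 : Function.update (Function.update p.1 k0 (p.2 k0)) k0
        ((Function.update p.2 k0 (p.1 k0)) k0) = p.1 := by
      rw [e1, Function.update_idem, Function.update_eq_self]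
    show max (f (Function.update p.1 k0 (p.2 k0)) -
        f (Function.update (Function.update p.1 k0 (p.2 k0)) k0
          ((Function.update p.2 k0 (p.1 k0)) k0))) 0 ^ 2
      = max (f (Function.update p.1 k0 (p.2 k0)) - f p.1) 0 ^ 2
    rw [e2]
  -- expansion of the square
  have iΦ2 : Integrable (fun p : (Fin n → E) × (Fin n → E) => f p.1 ^ 2) (π.prod π) :=
    ΦL2.integrable_sq
  have iΨ2 : Integrable (fun p : (Fin n → E) × (Fin n → E) =>
      f (Function.update p.1 k0 (p.2 k0)) ^ 2) (π.prod π) := ΨL2.integrable_sq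
  have iΦΨ : Integrable (fun p : (Fin n → E) × (Fin n → E) =>
      f p.1 * f (Function.update p.1 k0 (p.2 k0))) (π.prod π) :=
    integrable_mul_of_memℒp_two ΦL2 ΨL2
  have hΦ2 : ∫ p, f p.1 ^ 2 ∂(π.prod π) = M2 :=
    mp_integral (mp_fst π π) (g := fun x => f x ^ 2)
      ((hf.pow measurable_const).aestronglyMeasurable)
  have hΨ2 : ∫ p, f (Function.update p.1 k0 (p.2 k0)) ^ 2 ∂(π.prod π) = M2 :=
    mp_integral mpΨ (g := fun x => f x ^ 2) ((hf.pow measurable_const).aestronglyMeasurable)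
  have hΦΨ : ∫ p, f p.1 * f (Function.update p.1 k0 (p.2 k0)) ∂(π.prod π) = D :=
    mp_integral (mp_eval P k0)
      (g := fun q : (Fin n → E) × E => f q.1 * f (Function.update q.1 k0 q.2))
      (((hf.comp measurable_fst).mul (hf.comp measurable_update')).aestronglyMeasurable)
  have e1 : (fun p : (Fin n → E) × (Fin n → E) =>
      (f p.1 - f (Function.update p.1 k0 (p.2 k0))) ^ 2)
      = fun p => f p.1 ^ 2 - 2 * (f p.1 * f (Function.update p.1 k0 (p.2 k0)))
          + f (Function.update p.1 k0 (p.2 k0)) ^ 2 := by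
    funext p; ring
  have isub : Integrable (fun p : (Fin n → E) × (Fin n → E) =>
      f p.1 ^ 2 - 2 * (f p.1 * f (Function.update p.1 k0 (p.2 k0)))) (π.prod π) := by
    exact iΦ2.sub (iΦΨ.const_mul 2)
  have h3 : ∫ p, (f p.1 - f (Function.update p.1 k0 (p.2 k0))) ^ 2 ∂(π.prod π)
      = 2 * M2 - 2 * D := by
    rw [e1, integral_add isub iΨ2, integral_sub iΦ2 (iΦΨ.const_mul 2), integral_const_mul,
      hΦ2, hΨ2, hΦΨ]
    ring
  have h2 : ∫ p, (f p.1 - f (Function.update p.1 k0 (p.2 k0))) ^ 2 ∂(π.prod π)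
      = 2 * ∫ p, max (f p.1 - f (Function.update p.1 k0 (p.2 k0))) 0 ^ 2 ∂(π.prod π) := by
    have e2 : (fun p : (Fin n → E) × (Fin n → E) =>
        (f p.1 - f (Function.update p.1 k0 (p.2 k0))) ^ 2)
        = fun p => max (f p.1 - f (Function.update p.1 k0 (p.2 k0))) 0 ^ 2
            + max (f (Function.update p.1 k0 (p.2 k0)) - f p.1) 0 ^ 2 := by
      funext p; rw [max_sq_add]
    rw [e2, integral_add imax1 imax2, ← hswap_eq]
    ring
  have hRHS : ∫ p, max (f p.1 - f (Function.update p.1 k0 (p.2 k0))) 0 ^ 2 ∂(π.prod π)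
      = M2 - D := by linarith
  -- telescoping
  have htel := Finset.sum_range_sub' (fun k => ∫ x, hh P f k x ^ 2 ∂π) n
  have hI0 : (∫ x, hh P f 0 x ^ 2 ∂π) = M2 := by rw [hh_zero]
  have hIn : (∫ x, hh P f n x ^ 2 ∂π) = (∫ x, f x ∂π) ^ 2 := by
    rw [hh_top, integral_const]
    simp
    rfl
  have hstep : ∀ k ∈ Finset.range n,
      (∫ x, hh P f k x ^ 2 ∂π) - (∫ x, hh P f (k + 1) x ^ 2 ∂π) ≤ M2 - D := by
    intro k hk
    have hkn := Finset.mem_range.mp hk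
    exact step_bound P hf hL2 hsymm ⟨k, hkn⟩ k0
  calc M2 - (∫ x, f x ∂π) ^ 2
      = ∑ k ∈ Finset.range n,
          ((∫ x, hh P f k x ^ 2 ∂π) - (∫ x, hh P f (k + 1) x ^ 2 ∂π)) := by
        rw [htel, hI0, hIn]
    _ ≤ ∑ _k ∈ Finset.range n, (M2 - D) := Finset.sum_le_sum hstep
    _ = n * (M2 - D) := by rw [Finset.sum_const, Finset.card_range, nsmul_eq_mul]
    _ = n * ∫ p, max (f p.1 - f (Function.update p.1 k0 (p.2 k0))) 0 ^ 2 ∂(π.prod π) := by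
        rw [hRHS]

end Main5

end ES

/-- Efron–Stein inequality, symmetric form. If `X₁,…,Xₙ` are i.i.d.,
`f` is a symmetric measurable function with `Z = f(X₁,…,Xₙ)` square-integrable,
and `Z' = f(X₁', X₂,…,Xₙ)` with `(X₁',…,Xₙ')` an independent copy, then
`Var(Z) ≤ n · E[(Z − Z')₊²]`. -/
theorem statement6 {Ω E : Type*} [MeasurableSpace Ω] [MeasurableSpace E]
    (Pr : Measure Ω) [IsProbabilityMeasure Pr] {n : ℕ} (hn : 0 < n)
    (P : Measure E) [IsProbabilityMeasure P]
    (X X' : Fin n → Ω → E) (hXm : ∀ i, Measurable (X i)) (hX'm : ∀ i, Measurable (X' i))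
    (hindep : iIndepFun (Sum.elim X X') Pr)
    (hlaw : ∀ i, Pr.map (X i) = P) (hlaw' : ∀ i, Pr.map (X' i) = P)
    (f : (Fin n → E) → ℝ) (hf : Measurable f)
    (hsymm : ∀ (e : Equiv.Perm (Fin n)) (v : Fin n → E), f (v ∘ e) = f v)
    (Z Z' : Ω → ℝ)
    (hZ : Z = fun ω => f (fun i => X i ω))
    (hZ' : Z' = fun ω => f (Function.update (fun i => X i ω) ⟨0, hn⟩ (X' ⟨0, hn⟩ ω)))
    (hL2 : MemLp Z 2 Pr) :
    variance Z Pr ≤ n * ∫ ω, (max (Z ω - Z' ω) 0) ^ 2 ∂Pr := by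
  classical
  set π := (Measure.pi fun _ : Fin n => P) with hπ
  -- the joint random vector with values in the big product space
  set T : Ω → (Fin n ⊕ Fin n) → E := fun ω j => Sum.elim X X' j ω with hT
  have hTm : Measurable T := by
    apply measurable_pi_lambda
    intro j
    cases j with
    | inl i => exact hXm i
    | inr i => exact hX'm i
  have hPrT : Pr.map T = Measure.pi fun _ : Fin n ⊕ Fin n => P := by
    refine (Measure.pi_eq fun s hs => ?_).symm
    rw [Measure.map_apply hTm (MeasurableSet.univ_pi hs)]
    have hpre : T ⁻¹' (Set.pi Set.univ s) = ⋂ j, (Sum.elim X X' j) ⁻¹' (s j) := by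
      ext ω
      simp [hT, Set.mem_iInter]
    have hind := (ProbabilityTheory.iIndepFun_iff_measure_inter_preimage_eq_mul.mp hindep)
      Finset.univ (fun j _ => hs j)
    have hbig : (⋂ j ∈ Finset.univ, (Sum.elim X X' j) ⁻¹' (s j))
        = ⋂ j, (Sum.elim X X' j) ⁻¹' (s j) := by simp
    rw [hpre, ← hbig, hind]
    refine Finset.prod_congr rfl fun j _ => ?_
    cases j with
    | inl i =>
        show Pr (X i ⁻¹' s _) = P (s _)
        rw [← hlaw i, Measure.map_apply (hXm i) (hs _)]
    | inr i =>
        show Pr (X' i ⁻¹' s _) = P (s _)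
        rw [← hlaw' i, Measure.map_apply (hX'm i) (hs _)]
  -- the pair of random vectors
  set B : Ω → (Fin n → E) × (Fin n → E) :=
    fun ω => (fun i => X i ω, fun i => X' i ω) with hB
  have hBm : Measurable B :=
    (measurable_pi_lambda _ fun i => hXm i).prodMk (measurable_pi_lambda _ fun i => hX'm i)
  have hmp : MeasurePreserving B Pr (π.prod π) := by
    refine ⟨hBm, ?_⟩
    have hsum := measurePreserving_sumPiEquivProdPi (X := fun _ : Fin n ⊕ Fin n => E)
      (fun _ => P)
    have hBT : B = (MeasurableEquiv.sumPiEquivProdPi (fun _ : Fin n ⊕ Fin n => E)) ∘ T := by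
      funext ω
      simp only [hB, hT, Function.comp_apply, MeasurableEquiv.sumPiEquivProdPi,
        MeasurableEquiv.coe_mk, Equiv.sumPiEquivProdPi, Equiv.coe_fn_mk]
      rfl
    rw [hBT, ← Measure.map_map (MeasurableEquiv.sumPiEquivProdPi
      (fun _ : Fin n ⊕ Fin n => E)).measurable hTm, hPrT]
    exact hsum.map_eq
  have hmpX : MeasurePreserving (fun ω => (fun i => X i ω)) Pr π := by
    have h := (ES.mp_fst π π).comp hmp
    exact h
  -- f is square integrable under the product law
  have hfπ : MemLp f 2 π := by
    have hZL : MemLp (fun ω => f (fun i => X i ω)) 2 Pr := by rw [← hZ]; exact hL2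
    have hg' : AEStronglyMeasurable f (Pr.map (fun ω => (fun i => X i ω))) :=
      hmpX.map_eq.symm ▸ hf.aestronglyMeasurable
    have h2 : MemLp f 2 (Pr.map (fun ω => (fun i => X i ω))) :=
      (memLp_map_measure_iff hg' hmpX.measurable.aemeasurable).2 hZL
    exact hmpX.map_eq ▸ h2
  -- variance identity
  have hvar : variance Z Pr = (∫ x, f x ^ 2 ∂π) - (∫ x, f x ∂π) ^ 2 := by
    rw [variance_eq_sub hL2]
    have h1 : Pr[Z ^ 2] = ∫ x, f x ^ 2 ∂π := by
      have : Pr[Z ^ 2] = ∫ ω, Z ω ^ 2 ∂Pr := by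
        congr 1
      rw [this, hZ]
      exact ES.mp_integral hmpX (g := fun x => f x ^ 2)
        ((hf.pow measurable_const).aestronglyMeasurable)
    have h2 : Pr[Z] = ∫ x, f x ∂π := by
      rw [hZ]
      exact ES.mp_integral hmpX hf.aestronglyMeasurable
    rw [h1, h2]
  -- right-hand side identity
  have hrhs : ∫ ω, (max (Z ω - Z' ω) 0) ^ 2 ∂Pr
      = ∫ p, max (f p.1 - f (Function.update p.1 ⟨0, hn⟩ (p.2 ⟨0, hn⟩))) 0 ^ 2
          ∂(π.prod π) := by
    rw [hZ, hZ']
    have hg : AEStronglyMeasurable (fun p : (Fin n → E) × (Fin n → E) =>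
        max (f p.1 - f (Function.update p.1 ⟨0, hn⟩ (p.2 ⟨0, hn⟩))) 0 ^ 2) (π.prod π) := by
      have m1 : Measurable (fun p : (Fin n → E) × (Fin n → E) => f p.1) :=
        hf.comp measurable_fst
      have m2u : Measurable (fun p : (Fin n → E) × (Fin n → E) =>
          Function.update p.1 (⟨0, hn⟩ : Fin n) (p.2 ⟨0, hn⟩)) := by
        exact measurable_update'.comp
          (measurable_fst.prodMk ((measurable_pi_apply _).comp measurable_snd))
      have m2 : Measurable (fun p : (Fin n → E) × (Fin n → E) =>
          f (Function.update p.1 ⟨0, hn⟩ (p.2 ⟨0, hn⟩))) := hf.comp m2u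
      exact (((m1.sub m2).max measurable_const).pow measurable_const).aestronglyMeasurable
    exact ES.mp_integral hmp hg
  rw [hvar, hrhs]
  exact ES.prod_side P hn hf hfπ hsymm
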